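/- The multivariate Rogers-Szegő polynomials satisfy the recursion H_{n+1}(t_1,...,t_{m-1}) = Σ_{i=0}^{m-1} e_{i+1}(t_1,...,t_{m-1},1) · (-1)^i · ((q)_n / (q)_{n-i}) · H_{n-i}(t_1,...,t_{m-1}) for n ≥ m-1, where e_{i+1} denotes the (i+1)-st elementary symmetric polynomial in m variables. -/

import Mathlib

/-- `(q)_n = (1-q)(1-q^2)⋯(1-q^n)`, with `(q)_0 = 1`. -/
noncomputable def qPoch {K : Type*} [Field K] (q : K) (n : ℕ) : K :=
  ∏ j ∈ Finset.range n, (1 - q ^ (j + 1))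

/-- The Rogers-Szegő polynomial in `m-1` variables:
`H_n(t_1,…,t_{m-1}) = Σ_{k_1+⋯+k_m=n} C(n; k_1,…,k_m)_q t_1^{k_1}⋯t_{m-1}^{k_{m-1}}`. -/
noncomputable def rogersSzegoMV {K : Type*} [Field K] (q : K) (m n : ℕ)
    (t : Fin (m - 1) → K) : K :=
  ∑ k ∈ Finset.Nat.antidiagonalTuple m n,
    (qPoch q n / ∏ i, qPoch q (k i)) *
      ∏ i : Fin (m - 1), t i ^ k (Fin.castLE (Nat.sub_le m 1) i)

namespace RSaux

open Finset PowerSeries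

variable {K : Type*} [Field K]

lemma qPoch_succ (q : K) (n : ℕ) : qPoch q (n + 1) = qPoch q n * (1 - q ^ (n + 1)) := by
  simp [qPoch, Finset.prod_range_succ]

lemma qPoch_ne_zero {q : K} (hq : ∀ k, 0 < k → q ^ k ≠ 1) (n : ℕ) : qPoch q n ≠ 0 := by
  unfold qPoch
  rw [Finset.prod_ne_zero_iff]
  intro j _ h
  exact hq (j + 1) (Nat.succ_pos j) (by linear_combination -h)

/-- `t^k / (q)_k`. -/
noncomputable def qb (q t : K) (k : ℕ) : K := t ^ k / qPoch q k

lemma qb_zero (q t : K) : qb q t 0 = 1 := by simp [qb, qPoch]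

/-- `G q s n = Σ_{k_1+⋯+k_m=n} ∏_j s_j^{k_j}/(q)_{k_j}`. -/
noncomputable def G (q : K) {m : ℕ} (s : Fin m → K) (n : ℕ) : K :=
  ∑ k ∈ Finset.Nat.antidiagonalTuple m n, ∏ j, qb q (s j) (k j)

noncomputable def Fser (q : K) {m : ℕ} (s : Fin m → K) : PowerSeries K :=
  PowerSeries.mk (G q s)

noncomputable def f1 (q t : K) : PowerSeries K := PowerSeries.mk (qb q t)

lemma sum_antidiagonalTuple_succ {M : Type*} [AddCommMonoid M] {m n : ℕ}
    (f : (Fin (m + 1) → ℕ) → M) :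
    ∑ k ∈ Finset.Nat.antidiagonalTuple (m + 1) n, f k =
      ∑ p ∈ Finset.HasAntidiagonal.antidiagonal n, ∑ x ∈ Finset.Nat.antidiagonalTuple m p.2,
        f (Fin.cons p.1 x) := by
  rw [Finset.sum_sigma']
  refine Finset.sum_nbij' (fun k => ⟨(k 0, ∑ i, Fin.tail k i), Fin.tail k⟩)
    (fun a => Fin.cons a.1.1 a.2) ?_ ?_ ?_ ?_ ?_
  · intro k hk
    rw [Finset.Nat.mem_antidiagonalTuple] at hk
    rw [Finset.mem_sigma, Finset.HasAntidiagonal.mem_antidiagonal]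
    exact ⟨by rw [← hk, Fin.sum_univ_succ]; rfl, Finset.Nat.mem_antidiagonalTuple.mpr rfl⟩
  · intro a ha
    rw [Finset.mem_sigma, Finset.HasAntidiagonal.mem_antidiagonal] at ha
    rw [Finset.Nat.mem_antidiagonalTuple, Fin.sum_univ_succ]
    have := Finset.Nat.mem_antidiagonalTuple.mp ha.2
    simp [this, ha.1]
  · intro k _; exact Fin.cons_self_tail k
  · intro a ha
    rw [Finset.mem_sigma, Finset.HasAntidiagonal.mem_antidiagonal] at ha
    have h2 := Finset.Nat.mem_antidiagonalTuple.mp ha.2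
    refine Sigma.ext ?_ (by simp [Fin.tail_cons])
    simp [Fin.tail_cons, h2]
  · intro k _; rw [Fin.cons_self_tail]

lemma Fser_zero (q : K) (s : Fin 0 → K) : Fser q s = 1 := by
  ext n
  rw [Fser, PowerSeries.coeff_mk, PowerSeries.coeff_one]
  cases n with
  | zero => simp [G]
  | succ n => simp [G]

lemma Fser_succ (q : K) {m : ℕ} (s : Fin (m + 1) → K) :
    Fser q s = f1 q (s 0) * Fser q (Fin.tail s) := by
  ext n
  rw [Fser, PowerSeries.coeff_mk, PowerSeries.coeff_mul]
  simp only [f1, Fser, PowerSeries.coeff_mk, G, Finset.mul_sum]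
  rw [sum_antidiagonalTuple_succ]
  refine Finset.sum_congr rfl fun p _ => Finset.sum_congr rfl fun x _ => ?_
  rw [Fin.prod_univ_succ]
  simp [Fin.tail]

lemma funcEq1 {q : K} (hq : ∀ k, 0 < k → q ^ k ≠ 1) (t : K) :
    (1 - PowerSeries.C t * PowerSeries.X) * f1 q t = PowerSeries.rescale q (f1 q t) := by
  ext n
  rw [PowerSeries.coeff_rescale, sub_mul, one_mul, mul_assoc, map_sub,
    PowerSeries.coeff_C_mul]
  cases n with
  | zero =>
    simp [f1, qb_zero]
  | succ n =>
    rw [PowerSeries.coeff_succ_X_mul]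
    simp only [f1, PowerSeries.coeff_mk]
    have hP := qPoch_ne_zero hq n
    have hQ : (1 : K) - q ^ (n + 1) ≠ 0 := by
      intro h; exact hq (n + 1) (Nat.succ_pos n) (by linear_combination -h)
    rw [qb, qb, qPoch_succ]
    field_simp
    ring

lemma funcEqProd {q : K} (hq : ∀ k, 0 < k → q ^ k ≠ 1) :
    ∀ (m : ℕ) (s : Fin m → K),
      (∏ j, (1 - PowerSeries.C (s j) * PowerSeries.X)) * Fser q s =
        PowerSeries.rescale q (Fser q s) := by
  intro m
  induction m with
  | zero =>
    intro s
    rw [Fser_zero]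
    simp
  | succ m ih =>
    intro s
    rw [Fin.prod_univ_succ, Fser_succ, map_mul, ← funcEq1 hq (s 0), ← ih (Fin.tail s)]
    simp only [Fin.tail]
    ring

lemma mapUnivSucc {m : ℕ} (s : Fin (m + 1) → K) :
    Multiset.map s (Finset.univ : Finset (Fin (m + 1))).val =
      s 0 ::ₘ Multiset.map (Fin.tail s) (Finset.univ : Finset (Fin m)).val := by
  rw [Fin.univ_succ, Finset.cons_val, Multiset.map_cons, Finset.map_val, Multiset.map_map]
  rfl

lemma esymm_zero' (s : Multiset K) : s.esymm 0 = 1 := by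
  simp [Multiset.esymm, Multiset.powersetCard_zero_left]

lemma esymm_cons (a : K) (s : Multiset K) (i : ℕ) :
    (a ::ₘ s).esymm (i + 1) = s.esymm (i + 1) + a * s.esymm i := by
  rw [Multiset.esymm, Multiset.powersetCard_cons, Multiset.map_add, Multiset.sum_add,
    Multiset.map_map]
  congr 1
  rw [Multiset.esymm, ← Multiset.sum_map_mul_left]
  congr 1
  refine Multiset.map_congr rfl fun x _ => ?_
  simp [Multiset.prod_cons]

lemma esymm_eq_zero {s : Multiset K} {i : ℕ} (h : Multiset.card s < i) : s.esymm i = 0 := by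
  rw [Multiset.esymm, Multiset.powersetCard_eq_empty _ h]
  simp

lemma coeffProd : ∀ (m : ℕ) (s : Fin m → K) (i : ℕ),
    PowerSeries.coeff i (∏ j, (1 - PowerSeries.C (s j) * PowerSeries.X)) =
      (-1) ^ i * (Multiset.map s (Finset.univ : Finset (Fin m)).val).esymm i := by
  intro m
  induction m with
  | zero =>
    intro s i
    have hprod1 : (∏ j : Fin 0, (1 - PowerSeries.C (s j) * PowerSeries.X)) = 1 := by simp
    rw [hprod1, PowerSeries.coeff_one]
    cases i with
    | zero => simp [esymm_zero']
    | succ i =>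
      have h0 : (Multiset.map s (Finset.univ : Finset (Fin 0)).val).esymm (i + 1) = 0 :=
        esymm_eq_zero (by simp)
      rw [h0]
      simp
  | succ m ih =>
    intro s i
    rw [Fin.prod_univ_succ, mapUnivSucc]
    have hp : (∏ i : Fin m, (1 - PowerSeries.C (s i.succ) * PowerSeries.X)) =
        ∏ j : Fin m, (1 - PowerSeries.C (Fin.tail s j) * PowerSeries.X) := rfl
    rw [hp]
    cases i with
    | zero =>
      rw [sub_mul, one_mul, mul_assoc, map_sub, PowerSeries.coeff_C_mul,
        mul_comm PowerSeries.X, PowerSeries.coeff_zero_mul_X, mul_zero, sub_zero,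
        ih (Fin.tail s) 0, esymm_zero', esymm_zero']
    | succ i =>
      rw [sub_mul, one_mul, mul_assoc, map_sub, PowerSeries.coeff_C_mul,
        PowerSeries.coeff_succ_X_mul, ih (Fin.tail s) (i + 1), ih (Fin.tail s) i,
        esymm_cons]
      ring

lemma mainId {q : K} (hq : ∀ k, 0 < k → q ^ k ≠ 1) (m : ℕ) (s : Fin m → K) (N : ℕ)
    (hmN : m ≤ N) :
    ∑ i ∈ Finset.range (m + 1),
        (-1 : K) ^ i * (Multiset.map s (Finset.univ : Finset (Fin m)).val).esymm i *
          G q s (N - i) =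
      q ^ N * G q s N := by
  have h := congrArg (PowerSeries.coeff N) (funcEqProd hq m s)
  rw [PowerSeries.coeff_mul, PowerSeries.coeff_rescale] at h
  simp only [Fser, PowerSeries.coeff_mk] at h
  rw [Finset.Nat.sum_antidiagonal_eq_sum_range_succ_mk] at h
  have h2 : ∑ i ∈ Finset.range (N + 1),
      (-1 : K) ^ i * (Multiset.map s (Finset.univ : Finset (Fin m)).val).esymm i *
        G q s (N - i) = q ^ N * G q s N := by
    rw [← h]
    refine Finset.sum_congr rfl fun i _ => ?_
    rw [coeffProd m s i]
  rw [← h2]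
  refine Finset.sum_subset (Finset.range_subset_range.mpr (by omega)) ?_
  intro i hi1 hi2
  rw [Finset.mem_range] at hi1 hi2
  have hcard : Multiset.card (Multiset.map s (Finset.univ : Finset (Fin m)).val) = m := by
    simp
  rw [esymm_eq_zero (by rw [hcard]; omega)]
  ring

end RSaux

open RSaux in
/-- `H_{n+1}(t_1,…,t_{m-1}) = Σ_{i=0}^{m-1} e_{i+1}(t_1,…,t_{m-1},1) (-1)^i
((q)_n/(q)_{n-i}) H_{n-i}(t_1,…,t_{m-1})` for `n ≥ m-1`, where `e_{i+1}` is the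
`(i+1)`-st elementary symmetric polynomial in `m` variables. -/
theorem rogersSzegoMV_recursion (m n : ℕ) (hm : 2 ≤ m) (hn : m - 1 ≤ n)
    (t : Fin (m - 1) → RatFunc ℚ) :
    rogersSzegoMV (RatFunc.X : RatFunc ℚ) m (n + 1) t =
      ∑ i ∈ Finset.range m,
        (Multiset.esymm (1 ::ₘ Multiset.map t Finset.univ.val) (i + 1)) * (-1 : RatFunc ℚ) ^ i *
          (qPoch (RatFunc.X : RatFunc ℚ) n / qPoch (RatFunc.X : RatFunc ℚ) (n - i)) *
          rogersSzegoMV (RatFunc.X : RatFunc ℚ) m (n - i) t := by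
  obtain ⟨M, rfl⟩ : ∃ M, m = M + 1 := ⟨m - 1, by omega⟩
  set q : RatFunc ℚ := RatFunc.X with hqdef
  have hq : ∀ k, 0 < k → q ^ k ≠ 1 := by
    intro k hk h
    have h1 : (algebraMap (Polynomial ℚ) (RatFunc ℚ)) (Polynomial.X ^ k) =
        (algebraMap (Polynomial ℚ) (RatFunc ℚ)) 1 := by
      rw [map_pow, RatFunc.algebraMap_X, map_one, h]
    have h2 := RatFunc.algebraMap_injective ℚ h1
    have h3 := congrArg Polynomial.natDegree h2
    rw [Polynomial.natDegree_X_pow, Polynomial.natDegree_one] at h3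
    omega
  have hM : M ≤ n := by omega
  set s : Fin (M + 1) → RatFunc ℚ := Fin.snoc (t : Fin M → RatFunc ℚ) 1 with hs
  -- the Rogers–Szegő polynomial in terms of `G`
  have hH : ∀ N : ℕ, rogersSzegoMV q (M + 1) N t = qPoch q N * G q s N := by
    intro N
    unfold rogersSzegoMV G
    rw [Finset.mul_sum]
    refine Finset.sum_congr rfl fun k _ => ?_
    have hprod : ∏ j, qb q (s j) (k j) =
        (∏ i : Fin (M + 1 - 1), t i ^ k (Fin.castLE (Nat.sub_le (M + 1) 1) i)) /
          ∏ j, qPoch q (k j) := by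
      simp only [qb]
      rw [Finset.prod_div_distrib]
      congr 1
      rw [Fin.prod_univ_castSucc (f := fun j => s j ^ k j)]
      have hlast : s (Fin.last M) = 1 := by simp [hs]
      rw [hlast, one_pow, mul_one]
      refine Finset.prod_congr rfl fun i _ => ?_
      have h1 : s i.castSucc = t i := by simp [hs]
      have h2 : k (Fin.castSucc i) = k (Fin.castLE (Nat.sub_le (M + 1) 1) i) := rfl
      rw [h1, h2]
    rw [hprod, div_mul_eq_mul_div, mul_div_assoc]
  -- the multiset identity
  have hmul : Multiset.map s (Finset.univ : Finset (Fin (M + 1))).val =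
      1 ::ₘ Multiset.map t (Finset.univ : Finset (Fin (M + 1 - 1))).val := by
    rw [Fin.univ_castSuccEmb, Finset.cons_val, Multiset.map_cons, Finset.map_val,
      Multiset.map_map]
    rw [hs, Fin.snoc_last]
    congr 1
    refine Multiset.map_congr rfl fun x _ => ?_
    simp [Fin.snoc_castSucc]
  -- the key identity
  have key := mainId hq (M + 1) s (n + 1) (by omega)
  rw [Finset.sum_range_succ'] at key
  simp only [pow_zero, one_mul, Nat.sub_zero, esymm_zero'] at key
  have key2 : (1 - q ^ (n + 1)) * G q s (n + 1) =
      ∑ i ∈ Finset.range (M + 1),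
        (-1 : RatFunc ℚ) ^ i *
          (Multiset.map s (Finset.univ : Finset (Fin (M + 1))).val).esymm (i + 1) *
          G q s (n - i) := by
    have hrw : ∑ i ∈ Finset.range (M + 1),
        (-1 : RatFunc ℚ) ^ (i + 1) *
          (Multiset.map s (Finset.univ : Finset (Fin (M + 1))).val).esymm (i + 1) *
          G q s (n + 1 - (i + 1)) =
        -∑ i ∈ Finset.range (M + 1),
          (-1 : RatFunc ℚ) ^ i *
            (Multiset.map s (Finset.univ : Finset (Fin (M + 1))).val).esymm (i + 1) *
            G q s (n - i) := by
      rw [← Finset.sum_neg_distrib]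
      refine Finset.sum_congr rfl fun i _ => ?_
      have : n + 1 - (i + 1) = n - i := by omega
      rw [this, pow_succ]
      ring
    rw [hrw] at key
    linear_combination key
  -- now conclude
  rw [hH (n + 1), qPoch_succ, mul_assoc, key2, Finset.mul_sum]
  refine Finset.sum_congr rfl fun i hi => ?_
  rw [Finset.mem_range] at hi
  rw [hH (n - i), ← hmul]
  have hPn : qPoch q (n - i) ≠ 0 := qPoch_ne_zero hq (n - i)
  field_simp
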